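/- With notation as in Theorem 1 of the MaxLogHash paper, P(δ = 1 ∧ max log-rank = j) = |A △ B|/2^{j+1} · (1 - 1/2^j)^{n-1}, where n = |A ∪ B| ≥ 2 and the event requires exactly one element w ∈ A △ B with r(w) = j and all other elements of A ∪ B having log-rank strictly less than j. -/

import Mathlib

open MeasureTheory ProbabilityTheory

lemma prob_lt_geom_aux {Ω : Type*} [MeasureSpace Ω] [IsProbabilityMeasure (ℙ : Measure Ω)]
    (X : Ω → ℕ) (hX : Measurable X)
    (h : ∀ j : ℕ, ℙ {ω | X ω = j} = (1 / 2 : ENNReal) ^ (j + 1)) (j : ℕ) :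
    ℙ {ω | X ω < j} = 1 - (1 / 2 : ENNReal) ^ j := by
  induction j with
  | zero => simp
  | succ k ih =>
    have hsplit : {ω | X ω < k + 1} = {ω | X ω < k} ∪ {ω | X ω = k} := by
      ext ω; simp only [Set.mem_setOf_eq, Set.mem_union]; omega
    have hm : MeasurableSet {ω | X ω = k} := hX (measurableSet_singleton k)
    have hdisj : Disjoint {ω | X ω < k} {ω | X ω = k} := by
      rw [Set.disjoint_left]; intro ω h1 h2
      simp only [Set.mem_setOf_eq] at h1 h2; omega
    rw [hsplit, measure_union hdisj hm, ih, h k]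
    have ha : (1 / 2 : ENNReal) ^ k = (1/2) ^ (k+1) + (1/2) ^ (k+1) := by
      rw [pow_succ, ← mul_add, ENNReal.add_halves, mul_one]
    set a : ENNReal := (1/2) ^ (k+1) with haa
    have h2a : a + a ≤ 1 := by
      rw [← ha]
      exact pow_le_one' (ENNReal.half_le_self (a := 1)) k
    have hle : a ≤ 1 - a := ENNReal.le_sub_of_add_le_right (by
      simp [haa, ENNReal.pow_ne_top, ENNReal.div_eq_top]) h2a
    rw [ha, tsub_add_eq_tsub_tsub, tsub_add_cancel_of_le hle]

/-- With independent geometric(1/2) log-ranks on `A ∪ B` and `n = |A ∪ B| ≥ 2`, the probability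
that exactly one element `w ∈ A △ B` has log-rank `j` while all other elements of `A ∪ B` have
log-rank strictly less than `j` equals `(|A △ B| / 2^{j+1}) (1 - 1/2^j)^{n-1}`. -/
theorem delta_and_max_rank_prob {Ω : Type*} [MeasureSpace Ω]
    [IsProbabilityMeasure (ℙ : Measure Ω)]
    {I : Type*} [DecidableEq I] (A B : Finset I)
    (n : ℕ) (hn : (A ∪ B).card = n) (h2 : 2 ≤ n)
    (r : I → Ω → ℕ) (hmeas : ∀ v, Measurable (r v))
    (hgeom : ∀ v ∈ A ∪ B, ∀ j : ℕ, ℙ {ω | r v ω = j} = (1 / 2) ^ (j + 1))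
    (hind : iIndepFun
      (fun v : ((A ∪ B : Finset I) : Type _) => r v.1) ℙ)
    (j : ℕ) :
    ℙ {ω | ∃ w ∈ (A \ B) ∪ (B \ A),
        r w ω = j ∧ ∀ u ∈ A ∪ B, u ≠ w → r u ω < j}
      = ((((A \ B) ∪ (B \ A)).card : ENNReal) / 2 ^ (j + 1))
          * (1 - (1 / 2) ^ j) ^ (n - 1) := by
  classical
  have hsub : ∀ x ∈ (A \ B) ∪ (B \ A), x ∈ A ∪ B := by
    intro x hx
    simp only [Finset.mem_union, Finset.mem_sdiff] at hx ⊢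
    tauto
  have hlt : ∀ v ∈ A ∪ B, ℙ {ω | r v ω < j} = 1 - (1 / 2 : ENNReal) ^ j := fun v hv =>
    prob_lt_geom_aux (r v) (hmeas v) (hgeom v hv) j
  set E : I → Set Ω := fun w => {ω | r w ω = j ∧ ∀ u ∈ A ∪ B, u ≠ w → r u ω < j} with hE
  have hset : {ω | ∃ w ∈ (A \ B) ∪ (B \ A),
      r w ω = j ∧ ∀ u ∈ A ∪ B, u ≠ w → r u ω < j}
      = ⋃ w ∈ (A \ B) ∪ (B \ A), E w := by
    ext ω; simp only [hE, Set.mem_setOf_eq, Set.mem_iUnion]; tauto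
  have hEeq : ∀ w ∈ A ∪ B, E w = ⋂ v : ((A ∪ B : Finset I) : Type _),
      (if v.1 = w then {ω | r v.1 ω = j} else {ω | r v.1 ω < j}) := by
    intro w hw
    ext ω
    simp only [hE, Set.mem_setOf_eq, Set.mem_iInter]
    constructor
    · rintro ⟨h1, hrest⟩ v
      by_cases hvw : v.1 = w
      · simp only [hvw, if_pos rfl]
        simpa [hvw] using h1
      · simp only [if_neg hvw, Set.mem_setOf_eq]
        exact hrest v.1 v.2 hvw
    · intro h
      constructor
      · have := h ⟨w, hw⟩
        simpa using this
      · intro u hu huw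
        have := h ⟨u, hu⟩
        simpa [huw] using this
  -- probability of each E w for w ∈ A ∪ B
  have hprob : ∀ w ∈ A ∪ B,
      ℙ (E w) = (1 / 2 : ENNReal) ^ (j + 1) * (1 - (1 / 2) ^ j) ^ (n - 1) := by
    intro w hw
    rw [hEeq w hw]
    rw [hind.meas_iInter (fun v => ?_)]
    · have : ∀ v : ((A ∪ B : Finset I) : Type _),
        ℙ (if v.1 = w then {ω | r v.1 ω = j} else {ω | r v.1 ω < j})
          = if v.1 = w then (1 / 2 : ENNReal) ^ (j + 1) else (1 - (1 / 2) ^ j) := by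
        intro v
        by_cases hvw : v.1 = w
        · simp only [if_pos hvw]; exact hgeom v.1 v.2 j
        · simp only [if_neg hvw]; exact hlt v.1 v.2
      rw [Finset.prod_congr rfl (fun v _ => this v)]
      have hprod : ∏ v : ((A ∪ B : Finset I) : Type _),
          (if v.1 = w then (1 / 2 : ENNReal) ^ (j + 1) else (1 - (1 / 2) ^ j))
          = ∏ u ∈ A ∪ B, (if u = w then (1 / 2 : ENNReal) ^ (j + 1) else (1 - (1 / 2) ^ j)) :=
        Finset.prod_coe_sort (A ∪ B)
          (fun u => if u = w then (1 / 2 : ENNReal) ^ (j + 1) else (1 - (1 / 2) ^ j))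
      rw [hprod, ← Finset.mul_prod_erase _ _ hw, if_pos rfl]
      have : ∀ u ∈ (A ∪ B).erase w,
          (if u = w then (1 / 2 : ENNReal) ^ (j + 1) else (1 - (1 / 2) ^ j))
          = (1 - (1 / 2 : ENNReal) ^ j) := by
        intro u hu
        rw [if_neg (Finset.mem_erase.mp hu).1]
      rw [Finset.prod_congr rfl this, Finset.prod_const,
        Finset.card_erase_of_mem hw, hn]
    · by_cases hvw : v.1 = w
      · rw [if_pos hvw]
        exact ⟨{j}, measurableSet_singleton j, rfl⟩
      · rw [if_neg hvw]
        exact ⟨Set.Iio j, measurableSet_Iio, rfl⟩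
  -- measurability of E w
  have hmeasE : ∀ w ∈ A ∪ B, MeasurableSet (E w) := by
    intro w hw
    rw [hEeq w hw]
    refine MeasurableSet.iInter (fun v => ?_)
    by_cases hvw : v.1 = w
    · rw [if_pos hvw]; exact hmeas v.1 (measurableSet_singleton j)
    · rw [if_neg hvw]; exact hmeas v.1 measurableSet_Iio
  -- pairwise disjointness
  have hpair : (↑((A \ B) ∪ (B \ A)) : Set I).PairwiseDisjoint E := by
    intro w hw w' hw' hne
    rw [Function.onFun, Set.disjoint_left]
    rintro ω ⟨h1, _⟩ ⟨_, h2'⟩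
    have := h2' w (hsub w (Finset.mem_coe.mp hw)) hne
    omega
  rw [hset, measure_biUnion_finset hpair (fun w hw => hmeasE w (hsub w hw)),
    Finset.sum_congr rfl (fun w hw => hprob w (hsub w hw)), Finset.sum_const,
    nsmul_eq_mul]
  have hdiv : ((((A \ B) ∪ (B \ A)).card : ENNReal) / 2 ^ (j + 1))
      = ((((A \ B) ∪ (B \ A)).card : ENNReal)) * (1 / 2) ^ (j + 1) := by
    rw [one_div, ← ENNReal.inv_pow, div_eq_mul_inv]
  rw [hdiv, mul_assoc]
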